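/- Let I be a finite index set and C a finite set; for each i ∈ I let S_i ⊆ C. Let k ≥ 1 be an integer and let p_i ∈ [0,1] for i ∈ I. On a probability space, let (X_i)_{i∈I} be independent random variables taking values in {0,1} with P(X_i = 1) = p_i, and write U = ⋃_{i : X_i = 1} S_i. Assume that |S_i| ≤ k for every i ∈ I, that E[|U|] ≥ 6k, and that for every e ∈ C, ∑_{i : e ∈ S_i} p_i ≤ 1/6. Then P(|U| ≥ k) ≥ 1/16. -/

import Mathlib

open MeasureTheory ProbabilityTheory

lemma aux_exp_bound {s : ℝ} (h0 : 0 ≤ s) (h6 : s ≤ 1/6) : Real.exp (-s) ≤ 1 - 5/6 * s := by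
  have h1 : s + 1 ≤ Real.exp s := Real.add_one_le_exp s
  have h2 : (0:ℝ) < Real.exp (-s) := Real.exp_pos _
  have h3 : Real.exp (-s) * Real.exp s = 1 := by rw [← Real.exp_add]; simp
  nlinarith [mul_le_mul_of_nonneg_left h1 h2.le]

set_option maxHeartbeats 1600000 in
/-- Independent `{0,1}` random variables `X i` select sets `S i ⊆ C` with `|S i| ≤ k`;
`U` is the random covered set. If the expected number of covered elements is at least
`6 k` and every element is fractionally covered to extent at most `1/6`, then `U` covers
at least `k` elements with probability at least `1/16`. -/
theorem stmt4 {Ω : Type*} [MeasurableSpace Ω] (μ : Measure Ω) [IsProbabilityMeasure μ]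
    {I : Type*} [Fintype I] {C : Type*} [Fintype C] [DecidableEq C]
    (S : I → Finset C) (k : ℕ) (hk : 1 ≤ k)
    (p : I → ℝ) (hp01 : ∀ i, p i ∈ Set.Icc (0 : ℝ) 1)
    (X : I → Ω → ℕ) (hmeas : ∀ i, Measurable (X i))
    (h01 : ∀ i ω, X i ω = 0 ∨ X i ω = 1)
    (hind : iIndepFun X μ)
    (hp : ∀ i, (μ {ω | X i ω = 1}).toReal = p i)
    (U : Ω → Finset C)
    (hU : ∀ ω, U ω = Finset.univ.biUnion fun i => if X i ω = 1 then S i else ∅)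
    (hsmall : ∀ i, (S i).card ≤ k)
    (hexp : (6 * k : ℝ) ≤ ∫ ω, ((U ω).card : ℝ) ∂μ)
    (hH2 : ∀ e : C, ∑ i ∈ Finset.univ.filter (fun i => e ∈ S i), p i ≤ 1 / 6) :
    (1 : ENNReal) / 16 ≤ μ {ω | k ≤ (U ω).card} := by
  classical
  have hp0 : ∀ i, 0 ≤ p i := fun i => (hp01 i).1
  have hp1 : ∀ i, p i ≤ 1 := fun i => (hp01 i).2
  have hX1 : ∀ i, MeasurableSet {ω | X i ω = 1} := fun i => hmeas i (measurableSet_singleton 1)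
  set Fe : C → Finset I := fun e => Finset.univ.filter (fun i => e ∈ S i) with hFe
  set AA : Finset I → Set Ω := fun F => ⋃ i ∈ F, {ω | X i ω = 1} with hAA
  have hAAmeas : ∀ F, MeasurableSet (AA F) :=
    fun F => F.measurableSet_biUnion (fun i _ => hX1 i)
  have hmemAA : ∀ (F : Finset I) ω, ω ∈ AA F ↔ ∃ i ∈ F, X i ω = 1 := by
    intro F ω; simp [hAA]
  set g : Finset I → ℝ := fun F => ∏ i ∈ F, (1 - p i) with hg
  have hg0 : ∀ F, 0 ≤ g F := fun F => Finset.prod_nonneg (fun i _ => by linarith [hp1 i])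
  have hg1 : ∀ F, g F ≤ 1 :=
    fun F => Finset.prod_le_one (fun i _ => by linarith [hp1 i]) (fun i _ => by linarith [hp0 i])
  -- probability of single zero-events
  have hset0 : ∀ i, ({ω | X i ω = 0} : Set Ω) = {ω | X i ω = 1}ᶜ := by
    intro i; ext ω
    simp only [Set.mem_setOf_eq, Set.mem_compl_iff]
    rcases h01 i ω with h | h <;> simp [h]
  have hprob0 : ∀ i, (μ {ω | X i ω = 0}).toReal = 1 - p i := by
    intro i
    rw [hset0 i, measure_compl (hX1 i) (measure_ne_top μ _), measure_univ,
      ENNReal.toReal_sub_of_le prob_le_one ENNReal.one_ne_top, ENNReal.toReal_one, hp i]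
  -- probability of a union (fire) event
  have hprobAA : ∀ F : Finset I, (μ (AA F)).toReal = 1 - g F := by
    intro F
    have hcompl : (AA F)ᶜ = ⋂ i ∈ F, {ω | X i ω = 0} := by
      rw [hAA]
      simp only [Set.compl_iUnion]
      exact Set.iInter₂_congr (fun i _ => (hset0 i).symm)
    have hmeasInter : μ (⋂ i ∈ F, {ω | X i ω = 0}) = ∏ i ∈ F, μ {ω | X i ω = 0} :=
      hind.meas_biInter (fun i _ => ⟨{0}, measurableSet_singleton 0, rfl⟩)
    have hx : μ ((AA F)ᶜ) = ∏ i ∈ F, μ {ω | X i ω = 0} := by rw [hcompl]; exact hmeasInter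
    have h2 : μ (AA F) = 1 - μ ((AA F)ᶜ) := by
      conv_lhs => rw [← compl_compl (AA F)]
      rw [measure_compl (hAAmeas F).compl (measure_ne_top μ _), measure_univ]
    rw [h2, hx, ENNReal.toReal_sub_of_le (by rw [← hx]; exact prob_le_one) ENNReal.one_ne_top,
      ENNReal.toReal_one, ENNReal.toReal_prod]
    have heq : ∏ i ∈ F, (μ {ω | X i ω = 0}).toReal = g F :=
      Finset.prod_congr rfl (fun i _ => hprob0 i)
    rw [heq]
  -- union bound
  have hub : ∀ F : Finset I, (μ (AA F)).toReal ≤ ∑ i ∈ F, p i := by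
    intro F
    have h1 : μ (AA F) ≤ ∑ i ∈ F, μ {ω | X i ω = 1} := measure_biUnion_finset_le F _
    have h2 := ENNReal.toReal_mono (ENNReal.sum_ne_top.2 fun i _ => measure_ne_top μ _) h1
    rwa [ENNReal.toReal_sum (fun i _ => measure_ne_top μ _),
      Finset.sum_congr rfl (fun i _ => hp i)] at h2
  -- lower bound via independence
  have hlb : ∀ F : Finset I, (∑ i ∈ F, p i) ≤ 1/6 →
      (5/6) * (∑ i ∈ F, p i) ≤ (μ (AA F)).toReal := by
    intro F hF
    rw [hprobAA]
    have h1 : g F ≤ Real.exp (-(∑ i ∈ F, p i)) := by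
      have h2 : g F ≤ ∏ i ∈ F, Real.exp (-p i) :=
        Finset.prod_le_prod (fun i _ => by linarith [hp1 i])
          (fun i _ => by linarith [Real.add_one_le_exp (-p i)])
      rw [← Real.exp_sum] at h2
      have h3 : (∑ i ∈ F, -p i) = -∑ i ∈ F, p i := by simp
      rwa [h3] at h2
    have h2 := aux_exp_bound (Finset.sum_nonneg (fun i _ => hp0 i)) hF
    linarith
  have hqnn : ∀ F : Finset I, 0 ≤ 1 - g F := fun F => by linarith [hg1 F]
  -- pair bound
  have hpair : ∀ e f : C, (μ (AA (Fe e) ∩ AA (Fe f))).toReal ≤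
      (∑ i ∈ Fe e ∩ Fe f, p i) + (1 - g (Fe e)) * (1 - g (Fe f)) := by
    intro e f
    set G := Fe e ∩ Fe f with hG
    set De := Fe e \ Fe f with hDe
    set Df := Fe f \ Fe e with hDf
    have hdisj : Disjoint De Df := disjoint_sdiff_sdiff
    have hsub : AA (Fe e) ∩ AA (Fe f) ⊆ AA G ∪ (AA De ∩ AA Df) := by
      rintro ω ⟨h1, h2⟩
      by_cases hgω : ω ∈ AA G
      · exact Or.inl hgω
      · obtain ⟨i, hiF, hi1⟩ := (hmemAA _ _).1 h1
        obtain ⟨j, hjF, hj1⟩ := (hmemAA _ _).1 h2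
        refine Or.inr ⟨(hmemAA _ _).2 ⟨i, ?_, hi1⟩, (hmemAA _ _).2 ⟨j, ?_, hj1⟩⟩
        · rw [hDe, Finset.mem_sdiff]
          exact ⟨hiF, fun hif => hgω ((hmemAA _ _).2 ⟨i, Finset.mem_inter.2 ⟨hiF, hif⟩, hi1⟩)⟩
        · rw [hDf, Finset.mem_sdiff]
          exact ⟨hjF, fun hjf => hgω ((hmemAA _ _).2 ⟨j, Finset.mem_inter.2 ⟨hjf, hjF⟩, hj1⟩)⟩
    have hmono : (μ (AA (Fe e) ∩ AA (Fe f))).toReal ≤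
        (μ (AA G)).toReal + (μ (AA De ∩ AA Df)).toReal := by
      have h1 : μ (AA (Fe e) ∩ AA (Fe f)) ≤ μ (AA G) + μ (AA De ∩ AA Df) :=
        le_trans (measure_mono hsub) (measure_union_le _ _)
      have h2 := ENNReal.toReal_mono
        (ENNReal.add_ne_top.2 ⟨measure_ne_top μ _, measure_ne_top μ _⟩) h1
      rwa [ENNReal.toReal_add (measure_ne_top μ _) (measure_ne_top μ _)] at h2
    have hUeq : AA De ∪ AA Df = AA (De ∪ Df) := by
      rw [hAA]; exact (Finset.set_biUnion_union De Df _).symm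
    have hadd : μ (AA De ∪ AA Df) + μ (AA De ∩ AA Df) = μ (AA De) + μ (AA Df) :=
      measure_union_add_inter _ (hAAmeas Df)
    have h1 := congrArg ENNReal.toReal hadd
    rw [ENNReal.toReal_add (measure_ne_top μ _) (measure_ne_top μ _),
      ENNReal.toReal_add (measure_ne_top μ _) (measure_ne_top μ _), hUeq, hprobAA, hprobAA,
      hprobAA] at h1
    have hprod : g (De ∪ Df) = g De * g Df := Finset.prod_union hdisj
    have hDeDf : (μ (AA De ∩ AA Df)).toReal = (1 - g De) * (1 - g Df) := by
      linear_combination h1 + hprod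
    have hsplitFe : G ∪ De = Fe e := by
      rw [hG, hDe, ← Finset.inf_eq_inter, ← Finset.sup_eq_union]
      exact sup_inf_sdiff _ _
    have hsplitFf : (Fe f ∩ Fe e) ∪ Df = Fe f := by
      rw [hDf, ← Finset.inf_eq_inter, ← Finset.sup_eq_union]
      exact sup_inf_sdiff _ _
    have hdisjGDe : Disjoint G De := by
      rw [hG, hDe]
      exact Finset.disjoint_left.2 fun i hi hj =>
        (Finset.mem_sdiff.1 hj).2 (Finset.mem_inter.1 hi).2
    have hdisjGDf : Disjoint (Fe f ∩ Fe e) Df := by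
      rw [hDf]
      exact Finset.disjoint_left.2 fun i hi hj =>
        (Finset.mem_sdiff.1 hj).2 (Finset.mem_inter.1 hi).2
    have hge : g (Fe e) ≤ g De := by
      have h2 : g (Fe e) = g G * g De := by rw [← hsplitFe]; exact Finset.prod_union hdisjGDe
      rw [h2]
      exact mul_le_of_le_one_left (hg0 De) (hg1 G)
    have hgf : g (Fe f) ≤ g Df := by
      have h2 : g (Fe f) = g (Fe f ∩ Fe e) * g Df :=
        calc g (Fe f) = g ((Fe f ∩ Fe e) ∪ Df) := by rw [hsplitFf]
          _ = g (Fe f ∩ Fe e) * g Df := Finset.prod_union hdisjGDf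
      rw [h2]
      exact mul_le_of_le_one_left (hg0 Df) (hg1 _)
    have hmul : (1 - g De) * (1 - g Df) ≤ (1 - g (Fe e)) * (1 - g (Fe f)) := by
      apply mul_le_mul (by linarith) (by linarith) (by linarith [hg1 Df]) (hqnn (Fe e))
    have hG2 := hub G
    linarith [hmono, hDeDf]
  -- indicator machinery
  set ind : Set Ω → Ω → ℝ := fun s => Set.indicator s (fun _ => (1:ℝ)) with hind'
  have hind0 : ∀ s ω, 0 ≤ ind s ω := by
    intro s ω; rw [hind']
    exact Set.indicator_nonneg (fun _ _ => by norm_num) ω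
  have hIint : ∀ s : Set Ω, MeasurableSet s → Integrable (ind s) μ := by
    intro s hs; rw [hind']
    exact (integrable_const (1:ℝ)).indicator hs
  have hIval : ∀ s : Set Ω, MeasurableSet s → ∫ ω, ind s ω ∂μ = (μ s).toReal := by
    intro s hs
    rw [hind', integral_indicator_const (1:ℝ) hs, smul_eq_mul, mul_one, measureReal_def]
  have hindmem : ∀ (s : Set Ω) ω, ω ∈ s → ind s ω = 1 := by
    intro s ω h; rw [hind']; exact Set.indicator_of_mem h _
  have hindnot : ∀ (s : Set Ω) ω, ω ∉ s → ind s ω = 0 := by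
    intro s ω h; rw [hind']; exact Set.indicator_of_notMem h _
  have hprod_ind : ∀ (s t : Set Ω) ω, ind (s ∩ t) ω = ind s ω * ind t ω := by
    intro s t ω
    by_cases hs : ω ∈ s <;> by_cases ht : ω ∈ t
    · rw [hindmem (s ∩ t) ω (Set.mem_inter hs ht), hindmem _ _ hs, hindmem _ _ ht]; norm_num
    · rw [hindnot (s ∩ t) ω (fun h => ht h.2), hindnot _ _ ht]; ring
    · rw [hindnot (s ∩ t) ω (fun h => hs h.1), hindnot _ _ hs]; ring
    · rw [hindnot (s ∩ t) ω (fun h => hs h.1), hindnot _ _ hs]; ring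
  -- card as sum of indicators
  have hcardfun : ∀ ω, ((U ω).card : ℝ) = ∑ e : C, ind (AA (Fe e)) ω := by
    intro ω
    have h1 : ∀ e : C, ind (AA (Fe e)) ω = if e ∈ U ω then (1:ℝ) else 0 := by
      intro e
      have hmem : ω ∈ AA (Fe e) ↔ e ∈ U ω := by
        rw [hmemAA, hU]
        constructor
        · rintro ⟨i, hiF, hX1i⟩
          have hSi : e ∈ S i := (Finset.mem_filter.1 hiF).2
          exact Finset.mem_biUnion.2 ⟨i, Finset.mem_univ i, by simp [hX1i, hSi]⟩
        · intro h
          obtain ⟨i, -, hi⟩ := Finset.mem_biUnion.1 h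
          by_cases hx : X i ω = 1
          · refine ⟨i, Finset.mem_filter.2 ⟨Finset.mem_univ i, ?_⟩, hx⟩
            simpa [hx] using hi
          · simp [hx] at hi
      by_cases h : e ∈ U ω
      · rw [if_pos h]; exact hindmem _ _ (hmem.2 h)
      · rw [if_neg h]; exact hindnot _ _ (fun hh => h (hmem.1 hh))
    rw [Finset.sum_congr rfl fun e _ => h1 e, Finset.sum_ite_mem, Finset.univ_inter,
      Finset.sum_const, nsmul_eq_mul, mul_one]
  -- expectation
  set q : C → ℝ := fun e => 1 - g (Fe e) with hq
  set m : ℝ := ∑ e : C, q e with hm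
  have hq6k : (6*(k:ℝ)) ≤ m := by
    have hintcard : ∫ ω, ((U ω).card : ℝ) ∂μ = m := by
      rw [integral_congr_ae (Filter.Eventually.of_forall hcardfun),
        integral_finset_sum _ (fun e _ => hIint _ (hAAmeas _))]
      exact Finset.sum_congr rfl fun e _ => by rw [hIval _ (hAAmeas _), hprobAA]
    rw [← hintcard]; exact hexp
  have hk1 : (1:ℝ) ≤ (k:ℝ) := by exact_mod_cast hk
  have hkm : (k:ℝ) ≤ m/6 := by linarith
  have hmpos : (0:ℝ) < m := by linarith
  set T : Set Ω := {ω | k ≤ (U ω).card} with hT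
  have hTmeas : MeasurableSet T := by
    have hmcardR : Measurable (fun ω => ((U ω).card : ℝ)) := by
      have h : (fun ω => ((U ω).card : ℝ)) = fun ω => ∑ e : C, ind (AA (Fe e)) ω :=
        funext hcardfun
      rw [h, hind']
      exact Finset.measurable_sum _ (fun e _ => measurable_const.indicator (hAAmeas _))
    have hTeq : T = (fun ω => ((U ω).card : ℝ)) ⁻¹' Set.Ici (k:ℝ) := by
      ext ω; simp [hT, Nat.cast_le]
    rw [hTeq]; exact hmcardR measurableSet_Ici
  -- m - k ≤ ∑ μ(A_e ∩ T)
  have hdiffsum : ∑ e : C, (μ (AA (Fe e) \ T)).toReal ≤ (k:ℝ) := by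
    have hptw : ∀ ω, ∑ e : C, ind (AA (Fe e) \ T) ω ≤ (k:ℝ) := by
      intro ω
      by_cases hωT : ω ∈ T
      · have hz : ∀ e : C, ind (AA (Fe e) \ T) ω = 0 :=
          fun e => hindnot (AA (Fe e) \ T) ω (fun h => h.2 hωT)
        rw [Finset.sum_congr rfl fun e _ => hz e, Finset.sum_const, smul_zero]
        positivity
      · have heq : ∀ e : C, ind (AA (Fe e) \ T) ω = ind (AA (Fe e)) ω := by
          intro e
          by_cases h : ω ∈ AA (Fe e)
          · rw [hindmem _ _ (show ω ∈ AA (Fe e) \ T from ⟨h, hωT⟩), hindmem _ _ h]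
          · rw [hindnot _ _ (fun hh => h hh.1), hindnot _ _ h]
        rw [Finset.sum_congr rfl fun e _ => heq e, ← hcardfun ω]
        have hlt : (U ω).card < k := by
          have : ¬ k ≤ (U ω).card := hωT
          omega
        have := hlt.le
        exact_mod_cast this
    calc ∑ e : C, (μ (AA (Fe e) \ T)).toReal
        = ∫ ω, ∑ e : C, ind (AA (Fe e) \ T) ω ∂μ := by
          rw [integral_finset_sum _ (fun e _ => hIint _ ((hAAmeas _).diff hTmeas))]
          exact (Finset.sum_congr rfl fun e _ =>
            (hIval _ ((hAAmeas _).diff hTmeas)).symm)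
      _ ≤ ∫ _ω, (k:ℝ) ∂μ :=
          integral_mono (integrable_finset_sum _
            (fun e _ => hIint _ ((hAAmeas _).diff hTmeas))) (integrable_const _) hptw
      _ = (k:ℝ) := by simp
  have hinterS : m - k ≤ ∑ e : C, (μ (AA (Fe e) ∩ T)).toReal := by
    have hdecomp : ∀ e : C, q e =
        (μ (AA (Fe e) ∩ T)).toReal + (μ (AA (Fe e) \ T)).toReal := by
      intro e
      have h1 := measure_inter_add_diff (μ := μ) (AA (Fe e)) hTmeas
      have h2 := congrArg ENNReal.toReal h1
      rw [ENNReal.toReal_add (measure_ne_top μ _) (measure_ne_top μ _)] at h2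
      rw [h2, hprobAA]
    have h3 : m = (∑ e : C, (μ (AA (Fe e) ∩ T)).toReal)
        + ∑ e : C, (μ (AA (Fe e) \ T)).toReal := by
      rw [hm, Finset.sum_congr rfl fun e _ => hdecomp e, Finset.sum_add_distrib]
    linarith [hdiffsum]
  -- AM-GM integral inequality
  have hAM : 2*m*(∑ e : C, (μ (AA (Fe e) ∩ T)).toReal) ≤
      (∑ e : C, ∑ f : C, (μ (AA (Fe e) ∩ AA (Fe f))).toReal)
        + m*m * (μ T).toReal := by
    have hptw : ∀ ω, 2*m*(∑ e : C, ind (AA (Fe e) ∩ T) ω) ≤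
        (∑ e : C, ∑ f : C, ind (AA (Fe e) ∩ AA (Fe f)) ω)
          + m*m * ind T ω := by
      intro ω
      set φ := ∑ e : C, ind (AA (Fe e)) ω with hφ
      have hφ0 : 0 ≤ φ := Finset.sum_nonneg fun e _ => hind0 _ ω
      have hL : ∑ e : C, ind (AA (Fe e) ∩ T) ω = φ * ind T ω := by
        rw [Finset.sum_congr rfl fun e _ => hprod_ind _ _ ω, ← Finset.sum_mul]
      have hRR : ∑ e : C, ∑ f : C, ind (AA (Fe e) ∩ AA (Fe f)) ω = φ * φ := by
        rw [Finset.sum_congr rfl fun e _ =>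
          Finset.sum_congr rfl fun f _ => hprod_ind _ _ ω, hφ, Finset.sum_mul_sum]
      rw [hL, hRR]
      by_cases hωT : ω ∈ T
      · rw [hindmem _ _ hωT]
        nlinarith [sq_nonneg (φ - m)]
      · rw [hindnot _ _ hωT]
        nlinarith [sq_nonneg φ]
    have hint1 : Integrable (fun ω => ∑ e : C, ind (AA (Fe e) ∩ T) ω) μ :=
      integrable_finset_sum _ fun e _ => hIint _ ((hAAmeas _).inter hTmeas)
    have hint2a : Integrable (fun ω => ∑ e : C, ∑ f : C, ind (AA (Fe e) ∩ AA (Fe f)) ω) μ :=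
      integrable_finset_sum _ fun e _ =>
        integrable_finset_sum _ fun f _ => hIint _ ((hAAmeas _).inter (hAAmeas _))
    have hint2 : Integrable (fun ω =>
        (∑ e : C, ∑ f : C, ind (AA (Fe e) ∩ AA (Fe f)) ω)
          + m*m * ind T ω) μ :=
      hint2a.add ((hIint _ hTmeas).const_mul _)
    have hval1 : ∫ ω, (∑ e : C, ind (AA (Fe e) ∩ T) ω) ∂μ
        = ∑ e : C, (μ (AA (Fe e) ∩ T)).toReal := by
      rw [integral_finset_sum _ (fun e _ => hIint _ ((hAAmeas _).inter hTmeas))]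
      exact Finset.sum_congr rfl fun e _ => hIval _ ((hAAmeas _).inter hTmeas)
    have hval2 : ∫ ω, (∑ e : C, ∑ f : C, ind (AA (Fe e) ∩ AA (Fe f)) ω) ∂μ
        = ∑ e : C, ∑ f : C, (μ (AA (Fe e) ∩ AA (Fe f))).toReal := by
      rw [integral_finset_sum _ (fun e _ => integrable_finset_sum _
        (fun f _ => hIint _ ((hAAmeas _).inter (hAAmeas _))))]
      refine Finset.sum_congr rfl fun e _ => ?_
      rw [integral_finset_sum _ (fun f _ => hIint _ ((hAAmeas _).inter (hAAmeas _)))]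
      exact Finset.sum_congr rfl fun f _ => hIval _ ((hAAmeas _).inter (hAAmeas _))
    calc 2*m*(∑ e : C, (μ (AA (Fe e) ∩ T)).toReal)
        = ∫ ω, 2*m*(∑ e : C, ind (AA (Fe e) ∩ T) ω) ∂μ := by
          rw [integral_const_mul, hval1]
      _ ≤ ∫ ω, ((∑ e : C, ∑ f : C, ind (AA (Fe e) ∩ AA (Fe f)) ω)
            + m*m * ind T ω) ∂μ :=
          integral_mono (hint1.const_mul _) hint2 hptw
      _ = (∑ e : C, ∑ f : C, (μ (AA (Fe e) ∩ AA (Fe f))).toReal)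
            + m*m * (μ T).toReal := by
          rw [integral_add hint2a ((hIint _ hTmeas).const_mul _),
            integral_const_mul, hval2, hIval _ hTmeas]
  -- bound the pair sum
  have hse : ∀ e : C, ∑ i ∈ Fe e, p i ≤ (6/5) * q e := by
    intro e
    have h1 := hlb (Fe e) (hH2 e)
    rw [hprobAA] at h1
    have : q e = 1 - g (Fe e) := rfl
    linarith
  have hsesum : ∑ e : C, ∑ i ∈ Fe e, p i ≤ (6/5) * m := by
    calc ∑ e : C, ∑ i ∈ Fe e, p i ≤ ∑ e : C, (6/5) * q e :=
          Finset.sum_le_sum fun e _ => hse e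
      _ = (6/5) * m := by rw [hm, Finset.mul_sum]
  have hswap : ∑ i : I, ((S i).card : ℝ) * p i = ∑ e : C, ∑ i ∈ Fe e, p i := by
    have h1 : ∀ e : C, ∑ i ∈ Fe e, p i = ∑ i : I, if e ∈ S i then p i else 0 := by
      intro e; rw [hFe, Finset.sum_filter]
    rw [Finset.sum_congr rfl fun e _ => h1 e, Finset.sum_comm]
    refine Finset.sum_congr rfl fun i _ => ?_
    rw [Finset.sum_ite_mem, Finset.univ_inter, Finset.sum_const, nsmul_eq_mul]
  have hRbound : ∑ e : C, ∑ f : C, ∑ i ∈ Fe e ∩ Fe f, p i ≤ (6/5) * k * m := by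
    have hFeInter : ∀ e f : C, Fe e ∩ Fe f
        = Finset.univ.filter (fun i => e ∈ S i ∧ f ∈ S i) := by
      intro e f; ext i
      simp [hFe, Finset.mem_filter, Finset.mem_inter, and_assoc, and_left_comm]
    have hstep : ∑ e : C, ∑ f : C, ∑ i ∈ Fe e ∩ Fe f, p i
        = ∑ i : I, ((S i).card : ℝ) * ((S i).card : ℝ) * p i := by
      have h2 : ∀ e f : C, ∑ i ∈ Fe e ∩ Fe f, p i
          = ∑ i : I, if e ∈ S i ∧ f ∈ S i then p i else 0 := by
        intro e f; rw [hFeInter e f, Finset.sum_filter]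
      rw [Finset.sum_congr rfl fun e _ => Finset.sum_congr rfl fun f _ => h2 e f]
      rw [Finset.sum_congr rfl fun e _ => Finset.sum_comm, Finset.sum_comm]
      refine Finset.sum_congr rfl fun i _ => ?_
      have hinner : ∀ e : C, ∑ f : C, (if e ∈ S i ∧ f ∈ S i then p i else 0)
          = if e ∈ S i then ((S i).card : ℝ) * p i else 0 := by
        intro e
        by_cases he : e ∈ S i
        · simp only [he, true_and, if_true]
          rw [Finset.sum_ite_mem, Finset.univ_inter, Finset.sum_const, nsmul_eq_mul]
        · simp [he]
      rw [Finset.sum_congr rfl fun e _ => hinner e, Finset.sum_ite_mem,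
        Finset.univ_inter, Finset.sum_const, nsmul_eq_mul]
      ring
    rw [hstep]
    have hterm : ∀ i : I, ((S i).card : ℝ) * ((S i).card : ℝ) * p i
        ≤ (k:ℝ) * (((S i).card : ℝ) * p i) := by
      intro i
      have hc : ((S i).card : ℝ) ≤ (k:ℝ) := by exact_mod_cast hsmall i
      have hc0 : (0:ℝ) ≤ ((S i).card : ℝ) := by positivity
      nlinarith [mul_le_mul_of_nonneg_right hc (mul_nonneg hc0 (hp0 i))]
    calc ∑ i : I, ((S i).card : ℝ) * ((S i).card : ℝ) * p i
        ≤ ∑ i : I, (k:ℝ) * (((S i).card : ℝ) * p i) :=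
          Finset.sum_le_sum fun i _ => hterm i
      _ = (k:ℝ) * ∑ i : I, ((S i).card : ℝ) * p i := by rw [Finset.mul_sum]
      _ = (k:ℝ) * ∑ e : C, ∑ i ∈ Fe e, p i := by rw [hswap]
      _ ≤ (k:ℝ) * ((6/5) * m) := by
          apply mul_le_mul_of_nonneg_left hsesum (by positivity)
      _ = (6/5) * k * m := by ring
  have hpairsum : ∑ e : C, ∑ f : C, (μ (AA (Fe e) ∩ AA (Fe f))).toReal
      ≤ (6/5) * k * m + m^2 := by
    have h1 : ∑ e : C, ∑ f : C, (μ (AA (Fe e) ∩ AA (Fe f))).toReal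
        ≤ ∑ e : C, ∑ f : C, ((∑ i ∈ Fe e ∩ Fe f, p i) + q e * q f) :=
      Finset.sum_le_sum fun e _ => Finset.sum_le_sum fun f _ => hpair e f
    have h2 : ∑ e : C, ∑ f : C, ((∑ i ∈ Fe e ∩ Fe f, p i) + q e * q f)
        = (∑ e : C, ∑ f : C, ∑ i ∈ Fe e ∩ Fe f, p i) + m^2 := by
      simp only [Finset.sum_add_distrib]
      rw [hm, sq, Finset.sum_mul_sum]
    rw [h2] at h1
    linarith [hRbound]
  -- conclude
  have hTval : (7:ℝ)/15 ≤ (μ T).toReal := by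
    by_contra hcon
    push_neg at hcon
    have hstep1 : 2*m*(m - k) ≤ 2*m*(∑ e : C, (μ (AA (Fe e) ∩ T)).toReal) :=
      mul_le_mul_of_nonneg_left hinterS (by positivity)
    have hstep2 : m*m*(μ T).toReal < m*m*(7/15) :=
      mul_lt_mul_of_pos_left hcon (by positivity)
    have hstep3 : m*(k:ℝ) ≤ m*(m/6) := mul_le_mul_of_nonneg_left hkm hmpos.le
    nlinarith [hstep1, hstep2, hstep3, hAM, hpairsum]
  have h16 : (1:ℝ)/16 ≤ (μ T).toReal := by linarith
  have h2 := ENNReal.ofReal_le_ofReal h16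
  rw [ENNReal.ofReal_toReal (measure_ne_top μ T)] at h2
  refine le_trans (le_of_eq ?_) h2
  rw [show ((1:ℝ)/16) = ((16:ℝ))⁻¹ by norm_num, ENNReal.ofReal_inv_of_pos (by norm_num)]
  rw [ENNReal.ofReal_ofNat, one_div]
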